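/- arXiv:1609.05483 — 3 statements merged into one kernel-verified Lean document; each statement's English description precedes it below -/
import Mathlib

section
/- Let 0 < m ≤ M, ρ ∈ (0,1), and y > 0, q̂ > 0. Suppose (1 − δ_q)·ρ·y ≤ q̂ ≤ (1 + δ_q)·y/ρ where δ_q = (M − m)/(M + m). Define λ = (M + m)·ρ/(M + m·ρ²) and z = λ·q̂. Then (1 − δ_z)·y ≤ z ≤ (1 + δ_z)·y, where δ_z = (M − m·ρ²)/(M + m·ρ²). In particular |z − y|/y ≤ δ_z. -/
theorem dvs_symmetric_error_bound
    (m M ρ y qhat : ℝ) (hm : 0 < m) (hmM : m ≤ M)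
    (hρ : ρ ∈ Set.Ioo (0 : ℝ) 1) (hy : 0 < y) (hqhat : 0 < qhat)
    (hlow : (1 - (M - m) / (M + m)) * ρ * y ≤ qhat)
    (hupp : qhat ≤ (1 + (M - m) / (M + m)) * y / ρ) :
    (1 - (M - m * ρ ^ 2) / (M + m * ρ ^ 2)) * y ≤
      ((M + m) * ρ / (M + m * ρ ^ 2)) * qhat ∧
    ((M + m) * ρ / (M + m * ρ ^ 2)) * qhat ≤
      (1 + (M - m * ρ ^ 2) / (M + m * ρ ^ 2)) * y ∧
    |((M + m) * ρ / (M + m * ρ ^ 2)) * qhat - y| / y ≤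
      (M - m * ρ ^ 2) / (M + m * ρ ^ 2) := by
  obtain ⟨hρ0, hρ1⟩ := hρ
  have hMm : 0 < M + m := by linarith
  have hM : 0 < M := lt_of_lt_of_le hm hmM
  have hD : 0 < M + m * ρ ^ 2 := by positivity
  have h1 : (1 - (M - m * ρ ^ 2) / (M + m * ρ ^ 2)) * y ≤
      ((M + m) * ρ / (M + m * ρ ^ 2)) * qhat := by
    rw [div_mul_eq_mul_div, sub_div' hD.ne', div_mul_eq_mul_div,
      div_le_div_iff₀ hD hD]
    have := hlow
    rw [sub_div' hMm.ne', div_mul_eq_mul_div, div_mul_eq_mul_div,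
      div_le_iff₀ hMm] at this
    nlinarith [mul_le_mul_of_nonneg_right this (le_of_lt (mul_pos hρ0 hD))]
  have h2 : ((M + m) * ρ / (M + m * ρ ^ 2)) * qhat ≤
      (1 + (M - m * ρ ^ 2) / (M + m * ρ ^ 2)) * y := by
    rw [div_mul_eq_mul_div, add_div' _ _ _ hD.ne', div_mul_eq_mul_div,
      div_le_div_iff₀ hD hD]
    have := hupp
    rw [add_div' _ _ _ hMm.ne', div_mul_eq_mul_div, div_div,
      le_div_iff₀ (by positivity : 0 < (M + m) * ρ)] at this
    nlinarith [mul_le_mul_of_nonneg_right this hD.le]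
  refine ⟨h1, h2, ?_⟩
  rw [div_le_iff₀ hy, abs_le]
  constructor <;> nlinarith
end

section
/- Let 0 < m ≤ M, δ̄ ∈ (0,1), and consider the constraint set S = {(ρ, λ̄) : 0 < ρ < 1 and max(1 − λ̄ρ/M, λ̄/(mρ) − 1) ≤ δ̄}. If (M/m)·(1−δ̄)/(1+δ̄) < 1, then the minimum of ρ over S is achieved at ρ* = sqrt((M/m)·(1−δ̄)/(1+δ̄)) with unique optimizer λ̄* = 2mM·ρ*/(M + m·(ρ*)²). -/
theorem threshold_optimization
    (m M δb : ℝ) (hm : 0 < m) (hmM : m ≤ M) (hδb : δb ∈ Set.Ioo (0 : ℝ) 1)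
    (hfeas : (M / m) * (1 - δb) / (1 + δb) < 1) :
    (∃ lam : ℝ, 0 < Real.sqrt ((M / m) * (1 - δb) / (1 + δb)) ∧
      Real.sqrt ((M / m) * (1 - δb) / (1 + δb)) < 1 ∧
      max (1 - lam * Real.sqrt ((M / m) * (1 - δb) / (1 + δb)) / M)
        (lam / (m * Real.sqrt ((M / m) * (1 - δb) / (1 + δb))) - 1) ≤ δb) ∧
    (∀ ρ lam : ℝ, 0 < ρ → ρ < 1 →
      max (1 - lam * ρ / M) (lam / (m * ρ) - 1) ≤ δb →
      Real.sqrt ((M / m) * (1 - δb) / (1 + δb)) ≤ ρ) ∧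
    (∀ lam : ℝ,
      max (1 - lam * Real.sqrt ((M / m) * (1 - δb) / (1 + δb)) / M)
        (lam / (m * Real.sqrt ((M / m) * (1 - δb) / (1 + δb))) - 1) ≤ δb →
      lam = 2 * m * M * Real.sqrt ((M / m) * (1 - δb) / (1 + δb)) /
        (M + m * (Real.sqrt ((M / m) * (1 - δb) / (1 + δb))) ^ 2)) := by
  obtain ⟨hδ0, hδ1⟩ := hδb
  have hM : 0 < M := lt_of_lt_of_le hm hmM
  have h1δ : 0 < 1 - δb := by linarith
  have h1δ' : 0 < 1 + δb := by linarith
  set c : ℝ := (M / m) * (1 - δb) / (1 + δb) with hc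
  have hc0 : 0 < c := by positivity
  set s : ℝ := Real.sqrt c with hs
  have hs0 : 0 < s := Real.sqrt_pos.mpr hc0
  have hs2 : s ^ 2 = c := Real.sq_sqrt hc0.le
  have hkeyc : m * c * (1 + δb) = M * (1 - δb) := by
    rw [hc]; field_simp
  have hkey : m * s ^ 2 * (1 + δb) = M * (1 - δb) := by rw [hs2]; exact hkeyc
  have hs1 : s < 1 := by
    have h := Real.sqrt_lt_sqrt hc0.le hfeas
    simpa using h
  refine ⟨⟨m * (1 + δb) * s, hs0, hs1, ?_⟩, ?_, ?_⟩
  · have e1 : 1 - m * (1 + δb) * s * s / M = δb := by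
      have : m * (1 + δb) * s * s = M * (1 - δb) := by nlinarith [hkey]
      rw [this]; field_simp; ring
    have e2 : m * (1 + δb) * s / (m * s) - 1 = δb := by
      field_simp; ring
    rw [e1, e2]; simp
  · intro ρ lam hρ0 hρ1 hmax
    have h1 : 1 - lam * ρ / M ≤ δb := le_trans (le_max_left _ _) hmax
    have h2 : lam / (m * ρ) - 1 ≤ δb := le_trans (le_max_right _ _) hmax
    have hl1 : M * (1 - δb) ≤ lam * ρ := by
      have h := (le_div_iff₀ hM).mp (by linarith : 1 - δb ≤ lam * ρ / M)
      nlinarith [h]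
    have hl2 : lam ≤ m * ρ * (1 + δb) := by
      have := (div_le_iff₀ (by positivity : (0:ℝ) < m * ρ)).mp (by linarith : lam / (m * ρ) ≤ 1 + δb)
      nlinarith [this]
    have hρ2 : c ≤ ρ ^ 2 := by
      have : M * (1 - δb) ≤ m * ρ ^ 2 * (1 + δb) := by nlinarith
      rw [hc]
      rw [div_le_iff₀ h1δ', div_mul_eq_mul_div, div_le_iff₀ hm]
      nlinarith
    calc s = Real.sqrt c := rfl
      _ ≤ Real.sqrt (ρ ^ 2) := Real.sqrt_le_sqrt hρ2
      _ = ρ := by rw [Real.sqrt_sq hρ0.le]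
  · intro lam hmax
    have h1 : 1 - lam * s / M ≤ δb := le_trans (le_max_left _ _) hmax
    have h2 : lam / (m * s) - 1 ≤ δb := le_trans (le_max_right _ _) hmax
    have hl1 : M * (1 - δb) ≤ lam * s := by
      have h := (le_div_iff₀ hM).mp (by linarith : 1 - δb ≤ lam * s / M)
      nlinarith [h]
    have hl2 : lam ≤ m * s * (1 + δb) := by
      have h := (div_le_iff₀ (by positivity : (0:ℝ) < m * s)).mp (by linarith : lam / (m * s) ≤ 1 + δb)
      nlinarith [h]
    have h3 : lam * s = M * (1 - δb) := le_antisymm (by nlinarith [hl2, hs0, hkey]) hl1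
    have h4 : lam * s = (m * (1 + δb) * s) * s := by
      rw [h3, ← hkey]; ring
    have hlam : lam = m * (1 + δb) * s := mul_right_cancel₀ hs0.ne' h4
    rw [hlam, hs2]
    have hden : M + m * c ≠ 0 := by positivity
    rw [eq_div_iff hden]
    linear_combination (m * s) * hkeyc
end

section
/- Let 0 < m ≤ M, and for each pixel i let m_i, M_i > 0 with m_i ≤ M_i. Given δ* ∈ (0,1) with δ* > (M_i − m_i)/(M_i + m_i) for all i, define h_i = log_b sqrt((m_i/M_i)·(1+δ*)/(1−δ*)) and h* = min_i h_i = log_b sqrt(min_i(m_i/M_i)·(1+δ*)/(1−δ*)). Then for any common threshold h ≤ h*, every pixel's uncertainty satisfies δ_z^i = (M_i − m_i·ρ²)/(M_i + m_i·ρ²) ≤ δ* where ρ = b^{-h}. -/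
theorem multi_pixel_common_threshold
    (b h δs : ℝ) (hb : 1 < b) (hh : 0 < h)
    (n : ℕ) (hn : 0 < n) (m M : Fin n → ℝ)
    (hm : ∀ i, 0 < m i) (hmM : ∀ i, m i ≤ M i)
    (hδ : δs ∈ Set.Ioo (0 : ℝ) 1)
    (hδi : ∀ i, (M i - m i) / (M i + m i) < δs)
    (hth : h ≤ Real.logb b
      (Real.sqrt ((⨅ i, m i / M i) * (1 + δs) / (1 - δs)))) :
    ∀ i, (M i - m i * (b ^ (-h) : ℝ) ^ 2) /
        (M i + m i * (b ^ (-h) : ℝ) ^ 2) ≤ δs := by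
  obtain ⟨hδ0, hδ1⟩ := hδ
  have hb0 : (0:ℝ) < b := lt_trans one_pos hb
  have hM : ∀ i, 0 < M i := fun i => lt_of_lt_of_le (hm i) (hmM i)
  have hne : Nonempty (Fin n) := ⟨⟨0, hn⟩⟩
  have hfpos : ∀ i, 0 < m i / M i := fun i => div_pos (hm i) (hM i)
  obtain ⟨j, hj⟩ := Finite.exists_min (fun i => m i / M i)
  have hbdd : BddBelow (Set.range fun i => m i / M i) :=
    ⟨m j / M j, by rintro x ⟨i, rfl⟩; exact hj i⟩
  have hinf : (⨅ i, m i / M i) = m j / M j :=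
    le_antisymm (ciInf_le hbdd j) (le_ciInf hj)
  set K : ℝ := (m j / M j) * (1 + δs) / (1 - δs) with hKdef
  have hK : 0 < K :=
    div_pos (mul_pos (hfpos j) (by linarith)) (by linarith)
  have hsqrtK : 0 < Real.sqrt K := Real.sqrt_pos.mpr hK
  set s : ℝ := b ^ h with hsdef
  have hs0 : 0 < s := Real.rpow_pos_of_pos hb0 h
  have hs : s ≤ Real.sqrt K := by
    calc s ≤ b ^ Real.logb b (Real.sqrt K) := by
            apply Real.rpow_le_rpow_of_exponent_le hb.le
            rw [hinf] at hth; exact hth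
      _ = Real.sqrt K := Real.rpow_logb hb0 (ne_of_gt hb) hsqrtK
  have hs2 : s ^ 2 ≤ K := by
    calc s ^ 2 ≤ Real.sqrt K ^ 2 := by
          exact pow_le_pow_left₀ hs0.le hs 2
      _ = K := Real.sq_sqrt hK.le
  have hneg : (b ^ (-h) : ℝ) = s⁻¹ := by
    rw [hsdef, ← Real.rpow_neg hb0.le]
  intro i
  set t : ℝ := (b ^ (-h) : ℝ) ^ 2 with htdef
  have ht1 : t * s ^ 2 = 1 := by
    rw [htdef, hneg]; field_simp
  have ht0 : 0 < t := by
    rw [htdef, hneg]; positivity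
  have hkey : s ^ 2 * (M i * (1 - δs)) ≤ m i * (1 + δs) := by
    have hle : s ^ 2 ≤ m i / M i * (1 + δs) / (1 - δs) := by
      refine hs2.trans ?_
      have : m j / M j ≤ m i / M i := hj i
      apply div_le_div_of_nonneg_right _ (by linarith)
      exact mul_le_mul_of_nonneg_right this (by linarith)
    rw [le_div_iff₀ (by linarith : (0:ℝ) < 1 - δs)] at hle
    have h3 := mul_le_mul_of_nonneg_right hle (hM i).le
    have heq : m i / M i * (1 + δs) * M i = m i * (1 + δs) := by
      rw [div_mul_eq_mul_div, div_mul_cancel₀ _ (hM i).ne']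
    nlinarith [h3, heq]
  have h2 : M i * (1 - δs) ≤ t * (m i * (1 + δs)) := by
    calc M i * (1 - δs) = t * (s ^ 2 * (M i * (1 - δs))) := by
          rw [← mul_assoc, ht1, one_mul]
      _ ≤ t * (m i * (1 + δs)) :=
          mul_le_mul_of_nonneg_left hkey ht0.le
  have hden : 0 < M i + m i * t := by
    have := mul_pos (hm i) ht0; linarith [hM i]
  rw [div_le_iff₀ hden]
  nlinarith [h2]
end
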